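/- Suppose r is the nonzero Gauss remainder of nonzero a, b ∈ ℤ[i], φ(r) ≥ φ(b) = n, and 2^{v₂(r)} divides w_{n-1}. Then either ℓ∞(r) = w_{n-1} - 2^{v₂(r)} or ℓ₁(r) ≥ wₙ - 2^{v₂(r)+1}; in both cases ℓ∞(r) ≥ wₙ - w_{n-1} and ℓ₁(r) ≥ w_{n-1} - 2^{v₂(r)}; and if ℓ∞(r) ≠ w_{n-1} - 2^{v₂(r)} then min(|Re r|, |Im r|) ≥ wₙ - w_{n-1}. -/

import Mathlib

open GaussianInt

noncomputable section

/-- The sequence w: w_{2k} = 3·2^k, w_{2k+1} = 4·2^k. -/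
def w (n : ℕ) : ℤ := if n % 2 = 0 then 3 * 2 ^ (n / 2) else 4 * 2 ^ (n / 2)

/-- 2-adic valuation of gcd(Re z, Im z). -/
def v2 (z : GaussianInt) : ℕ := padicValNat 2 (Int.gcd z.re z.im)

/-- ℓ₁ norm. -/
def l1 (z : GaussianInt) : ℤ := |z.re| + |z.im|

/-- ℓ∞ norm. -/
def linf (z : GaussianInt) : ℤ := max |z.re| |z.im|

/-- m(z) = min(|Re z|, |Im z|). -/
def mm (z : GaussianInt) : ℤ := min |z.re| |z.im|

/-- The algebraic norm. -/
def Nm (z : GaussianInt) : ℤ := z.re ^ 2 + z.im ^ 2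

/-- Graves' formula for the minimal Euclidean function φ on ℤ[i]. -/
def phi (z : GaussianInt) : ℕ :=
  let j := v2 z
  let n := sInf {n : ℕ | |z.re| ≤ 2 ^ j * (w n - 2) ∧ |z.im| ≤ 2 ^ j * (w n - 2)}
  if l1 z ≤ 2 ^ j * (w (n + 1) - 3) then n + 2 * j else n + 2 * j + 1

/-- Nearest integer, rounding halves down. -/
def nint (x : ℚ) : ℤ := if x - ⌊x⌋ ≤ 1 / 2 then ⌊x⌋ else ⌈x⌉

/-- Gauss quotient: coordinatewise nearest-integer rounding of a·conj(b)/Nm(b). -/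
def gq (a b : GaussianInt) : GaussianInt :=
  ⟨nint (((a.re * b.re + a.im * b.im : ℤ) : ℚ) / ((b.re ^ 2 + b.im ^ 2 : ℤ) : ℚ)),
   nint (((a.im * b.re - a.re * b.im : ℤ) : ℚ) / ((b.re ^ 2 + b.im ^ 2 : ℤ) : ℚ))⟩

/-- Gauss remainder. -/
def gr (a b : GaussianInt) : GaussianInt := a - gq a b * b

/-- The imaginary unit in ℤ[i]. -/
def Ii : GaussianInt := ⟨0, 1⟩

/-- The canonical unit u_z. -/
def uz (z : GaussianInt) : GaussianInt :=
  if |z.re| > |z.im| then (if 0 < z.re then 1 else -1)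
  else if |z.im| > |z.re| then (if 0 < z.im then -Ii else Ii)
  else if 0 < z.re then (if 0 < z.im then 1 else Ii)
  else (if 0 < z.im then -Ii else -1)

/-- s(z) = sgn(Im(u_z·z)). -/
def sfun (z : GaussianInt) : ℤ := Int.sign ((uz z * z).im)



lemma w_even (k : ℕ) : w (2*k) = 3 * 2^k := by
  simp [w, Nat.mul_div_cancel_left, Nat.mul_mod_right]

lemma w_odd (k : ℕ) : w (2*k+1) = 4 * 2^k := by
  have h1 : (2*k+1) % 2 = 1 := by omega
  have h2 : (2*k+1) / 2 = k := by omega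
  simp [w, h1, h2]

lemma three_le_w (n : ℕ) : 3 ≤ w n := by
  rcases Nat.even_or_odd n with ⟨k, hk⟩ | ⟨k, hk⟩
  · rw [show n = 2*k by omega, w_even]
    have : (1:ℤ) ≤ 2^k := one_le_pow₀ (by norm_num)
    linarith
  · rw [show n = 2*k+1 by omega, w_odd]
    have : (1:ℤ) ≤ 2^k := one_le_pow₀ (by norm_num)
    linarith

lemma w_mono : Monotone w := by
  apply monotone_nat_of_le_succ
  intro n
  rcases Nat.even_or_odd n with ⟨k, hk⟩ | ⟨k, hk⟩
  · rw [show n = 2*k by omega, w_even, w_odd]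
    have : (0:ℤ) ≤ 2^k := by positivity
    linarith
  · rw [show n = 2*k+1 by omega, show 2*k+1+1 = 2*(k+1) by omega, w_odd, w_even]
    have : (0:ℤ) ≤ 2^k := by positivity
    rw [pow_succ]; linarith

lemma w_shift (m j : ℕ) : w (m + 2*j) = 2^j * w m := by
  induction j with
  | zero => simp
  | succ j ih =>
    have : m + 2*(j+1) = (m + 2*j) + 2 := by omega
    rw [this]
    have h2 : ∀ t, w (t+2) = 2 * w t := by
      intro t
      rcases Nat.even_or_odd t with ⟨k, hk⟩ | ⟨k, hk⟩
      · rw [show t = 2*k by omega, show 2*k+2 = 2*(k+1) by omega, w_even, w_even, pow_succ]; ring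
      · rw [show t = 2*k+1 by omega, show 2*k+1+2 = 2*(k+1)+1 by omega, w_odd, w_odd, pow_succ]; ring
    rw [h2, ih, pow_succ]; ring

lemma w_lower (n : ℕ) : (n:ℤ) + 3 ≤ w n := by
  rcases Nat.even_or_odd n with ⟨k, hk⟩ | ⟨k, hk⟩
  · rw [show n = 2*k by omega, w_even]
    have : (k:ℤ) + 1 ≤ 2^k := by
      have := @Nat.lt_two_pow_self k
      exact_mod_cast this
    push_cast; linarith
  · rw [show n = 2*k+1 by omega, w_odd]
    have : (k:ℤ) + 1 ≤ 2^k := by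
      have := @Nat.lt_two_pow_self k
      exact_mod_cast this
    push_cast; linarith

lemma nint_abs (x : ℚ) : |x - nint x| ≤ 1/2 := by
  unfold nint
  split_ifs with h
  · rw [abs_le]
    constructor
    · have := Int.floor_le x; push_cast; linarith
    · push_cast; linarith
  · push_neg at h
    rw [abs_le]
    have h1 := Int.ceil_le_floor_add_one x
    have h2 := Int.le_ceil x
    have h1' : ((⌈x⌉:ℤ):ℚ) ≤ ((⌊x⌋:ℤ):ℚ) + 1 := by exact_mod_cast h1
    constructor
    · linarith
    · linarith

-- key bound: 2 * |s - nint(s/N) * N| ≤ N, for N > 0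

lemma nint_key (s N : ℤ) (hN : 0 < N) : 2 * |s - nint ((s:ℚ)/(N:ℚ)) * N| ≤ N := by
  have hNQ : (0:ℚ) < (N:ℚ) := by exact_mod_cast hN
  have h := nint_abs ((s:ℚ)/(N:ℚ))
  have h2 : |(s:ℚ) - nint ((s:ℚ)/(N:ℚ)) * N| ≤ N/2 := by
    have : (s:ℚ) - nint ((s:ℚ)/(N:ℚ)) * N = ((s:ℚ)/(N:ℚ) - nint ((s:ℚ)/(N:ℚ))) * N := by
      field_simp
    rw [this, abs_mul, abs_of_pos hNQ]
    calc |(s:ℚ)/(N:ℚ) - nint ((s:ℚ)/(N:ℚ))| * N ≤ (1/2) * N := by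
          apply mul_le_mul_of_nonneg_right h (le_of_lt hNQ)
      _ = N/2 := by ring
  have : (2 * |s - nint ((s:ℚ)/(N:ℚ)) * N| : ℚ) ≤ (N:ℚ) := by
    push_cast
    rw [abs_sub_comm] at h2
    rw [abs_sub_comm]
    linarith [h2]
  exact_mod_cast this

lemma gr_bound (a b : GaussianInt) (hb : b ≠ 0) :
    2 * |(gr a b).re| ≤ l1 b ∧ 2 * |(gr a b).im| ≤ l1 b := by
  set N : ℤ := b.re^2 + b.im^2 with hNdef
  have hN : 0 < N := by
    have hb' : b.re ≠ 0 ∨ b.im ≠ 0 := by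
      by_contra h
      push_neg at h
      exact hb (Zsqrtd.ext_iff.mpr ⟨h.1, h.2⟩)
    rcases hb' with h | h
    · have : 0 < b.re^2 := lt_of_le_of_ne (sq_nonneg _) (Ne.symm (pow_ne_zero 2 h))
      nlinarith [sq_nonneg b.im]
    · have : 0 < b.im^2 := lt_of_le_of_ne (sq_nonneg _) (Ne.symm (pow_ne_zero 2 h))
      nlinarith [sq_nonneg b.re]
  set s1 : ℤ := a.re * b.re + a.im * b.im with hs1
  set s2 : ℤ := a.im * b.re - a.re * b.im with hs2
  set q1 : ℤ := nint ((s1:ℚ)/(N:ℚ)) with hq1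
  set q2 : ℤ := nint ((s2:ℚ)/(N:ℚ)) with hq2
  have k1 : 2 * |s1 - q1 * N| ≤ N := nint_key s1 N hN
  have k2 : 2 * |s2 - q2 * N| ≤ N := nint_key s2 N hN
  have e1 : |2*(s1 - q1*N)| ≤ N := by
    rw [abs_mul, abs_two]; linarith [abs_nonneg (s1 - q1*N)]
  have e2 : |2*(s2 - q2*N)| ≤ N := by
    rw [abs_mul, abs_two]; linarith [abs_nonneg (s2 - q2*N)]
  have hgqre : (gq a b).re = q1 := rfl
  have hgqim : (gq a b).im = q2 := rfl
  have hre : (gr a b).re = a.re - (q1 * b.re - q2 * b.im) := by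
    show (a - gq a b * b).re = _
    rw [Zsqrtd.re_sub, Zsqrtd.re_mul, hgqre, hgqim]
    ring
  have him : (gr a b).im = a.im - (q1 * b.im + q2 * b.re) := by
    show (a - gq a b * b).im = _
    rw [Zsqrtd.im_sub, Zsqrtd.im_mul, hgqre, hgqim]
  have habs : ∀ u v x y : ℤ, |u| ≤ N → |v| ≤ N → |u * x - v * y| ≤ N * (|x| + |y|) := by
    intro u v x y hu hv
    calc |u * x - v * y| ≤ |u * x| + |v * y| := abs_sub _ _
      _ = |u| * |x| + |v| * |y| := by rw [abs_mul, abs_mul]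
      _ ≤ N*|x| + N*|y| := by
          apply add_le_add <;> apply mul_le_mul_of_nonneg_right <;>
            first | assumption | positivity
      _ = N * (|x| + |y|) := by ring
  constructor
  · have key : 2 * (N * (gr a b).re) = (2*(s1 - q1*N)) * b.re - (2*(s2 - q2*N)) * b.im := by
      rw [hre]; simp only [hNdef, hs1, hs2]; ring
    have h1 : |2 * (N * (gr a b).re)| ≤ N * (|b.re| + |b.im|) := by
      rw [key]; exact habs _ _ _ _ e1 e2
    have h2 : 2 * (N * |(gr a b).re|) ≤ N * (|b.re| + |b.im|) := by
      calc 2 * (N * |(gr a b).re|) = |2 * (N * (gr a b).re)| := by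
            rw [abs_mul, abs_mul, abs_two, abs_of_pos hN]
        _ ≤ _ := h1
    have h3 : N * (2 * |(gr a b).re|) ≤ N * (|b.re| + |b.im|) := by linarith
    have := (mul_le_mul_iff_right₀ hN).mp h3
    simpa [l1] using this
  · have key : 2 * (N * (gr a b).im) = (2*(s1 - q1*N)) * b.im - (-(2*(s2 - q2*N))) * b.re := by
      rw [him]; simp only [hNdef, hs1, hs2]; ring
    have e2' : |(-(2*(s2 - q2*N)))| ≤ N := by rwa [abs_neg]
    have h1 : |2 * (N * (gr a b).im)| ≤ N * (|b.im| + |b.re|) := by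
      rw [key]; exact habs _ _ _ _ e1 e2'
    have h2 : 2 * (N * |(gr a b).im|) ≤ N * (|b.im| + |b.re|) := by
      calc 2 * (N * |(gr a b).im|) = |2 * (N * (gr a b).im)| := by
            rw [abs_mul, abs_mul, abs_two, abs_of_pos hN]
        _ ≤ _ := h1
    have h3 : N * (2 * |(gr a b).im|) ≤ N * (|b.im| + |b.re|) := by linarith
    have := (mul_le_mul_iff_right₀ hN).mp h3
    have : 2 * |(gr a b).im| ≤ |b.im| + |b.re| := this
    simp only [l1]
    linarith

lemma w0 : w 0 = 3 := by simp [w]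

lemma phi_spec (z : GaussianInt) : ∃ m : ℕ,
    linf z ≤ 2^(v2 z) * (w m - 2) ∧
    (∀ m', m' < m → 2^(v2 z) * (w m' - 2) < linf z) ∧
    ((l1 z ≤ 2^(v2 z) * (w (m+1) - 3) ∧ phi z = m + 2*(v2 z)) ∨
     (2^(v2 z) * (w (m+1) - 3) < l1 z ∧ phi z = m + 2*(v2 z) + 1)) := by
  set j := v2 z with hj
  set S : Set ℕ := {n : ℕ | |z.re| ≤ 2 ^ j * (w n - 2) ∧ |z.im| ≤ 2 ^ j * (w n - 2)} with hS
  have hone : (1:ℤ) ≤ 2^j := one_le_pow₀ (by norm_num)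
  have hne : S.Nonempty := by
    refine ⟨z.re.natAbs + z.im.natAbs, ?_, ?_⟩ <;>
    · have h1 := w_lower (z.re.natAbs + z.im.natAbs)
      have ha1 := abs_nonneg z.re
      have ha2 := abs_nonneg z.im
      have h2 : |z.re| ≤ (z.re.natAbs : ℤ) := by rw [Int.abs_eq_natAbs]
      have h3 : |z.im| ≤ (z.im.natAbs : ℤ) := by rw [Int.abs_eq_natAbs]
      have h4 : (1:ℤ) ≤ w (z.re.natAbs + z.im.natAbs) - 2 := by push_cast at h1 ⊢; linarith
      have h5 : w (z.re.natAbs + z.im.natAbs) - 2 ≤ 2^j * (w (z.re.natAbs + z.im.natAbs) - 2) :=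
        le_mul_of_one_le_left (by linarith) hone
      push_cast at h1 ⊢
      linarith
  refine ⟨sInf S, ?_, ?_, ?_⟩
  · obtain ⟨h1, h2⟩ := Nat.sInf_mem hne
    exact max_le h1 h2
  · intro m' hm'
    have h := Nat.notMem_of_lt_sInf hm'
    rw [hS] at h
    simp only [Set.mem_setOf_eq, not_and_or, not_le] at h
    rcases h with h | h
    · exact lt_of_lt_of_le h (le_max_left _ _)
    · exact lt_of_lt_of_le h (le_max_right _ _)
  · show (l1 z ≤ 2^j * (w (sInf S + 1) - 3) ∧ phi z = sInf S + 2*j) ∨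
      (2^j * (w (sInf S + 1) - 3) < l1 z ∧ phi z = sInf S + 2*j + 1)
    have hphi : phi z = if l1 z ≤ 2 ^ j * (w (sInf S + 1) - 3) then sInf S + 2 * j
        else sInf S + 2 * j + 1 := by
      rw [phi, ← hj, ← hS]
    split_ifs at hphi with h
    · exact Or.inl ⟨h, hphi⟩
    · exact Or.inr ⟨lt_of_not_ge h, hphi⟩

lemma coprime23 : IsCoprime (2:ℤ) 3 := by
  rw [Int.isCoprime_iff_gcd_eq_one]; norm_num


theorem stmt14 (a b r : GaussianInt) (n : ℕ) (ha : a ≠ 0) (hb : b ≠ 0) (hr : r = gr a b)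
    (hr0 : r ≠ 0) (hphi : phi r ≥ phi b) (hn : phi b = n) (hn1 : 1 ≤ n)
    (hdvd : (2 ^ (v2 r) : ℤ) ∣ w (n - 1)) :
    (linf r = w (n - 1) - 2 ^ (v2 r) ∨ l1 r ≥ w n - 2 ^ (v2 r + 1)) ∧
    linf r ≥ w n - w (n - 1) ∧ l1 r ≥ w (n - 1) - 2 ^ (v2 r) ∧
    (linf r ≠ w (n - 1) - 2 ^ (v2 r) → mm r ≥ w n - w (n - 1)) := by
  obtain ⟨p, rfl⟩ : ∃ p, n = p + 1 := ⟨n - 1, by omega⟩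
  simp only [Nat.add_sub_cancel] at hdvd ⊢
  rw [pow_succ]
  set D : ℤ := 2 ^ (v2 r) with hDdef
  have hDpos : (0:ℤ) < D := by positivity
  have hD1 : (1:ℤ) ≤ D := hDpos
  -- basic abs facts about r
  have habs1 := abs_nonneg r.re
  have habs2 := abs_nonneg r.im
  have hl1_linf : linf r ≤ l1 r := by
    simp only [linf, l1]
    rcases max_cases |r.re| |r.im| with ⟨h1, h2⟩ | ⟨h1, h2⟩ <;> rw [h1] <;> linarith
  have hl1_2linf : l1 r ≤ 2 * linf r := by
    simp only [linf, l1]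
    rcases max_cases |r.re| |r.im| with ⟨h1, h2⟩ | ⟨h1, h2⟩ <;> rw [h1] <;> linarith
  have hmm : mm r = l1 r - linf r := by
    simp only [mm, l1, linf]
    rcases max_cases |r.re| |r.im| with ⟨h1, h2⟩ | ⟨h1, h2⟩ <;>
      rcases min_cases |r.re| |r.im| with ⟨h3, h4⟩ | ⟨h3, h4⟩ <;> rw [h1, h3] <;> linarith
  -- positivity of linf r
  have hpos : 0 < linf r := by
    have : r.re ≠ 0 ∨ r.im ≠ 0 := by
      by_contra h
      push_neg at h
      exact hr0 (Zsqrtd.ext_iff.mpr ⟨h.1, h.2⟩)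
    rcases this with h | h
    · exact lt_of_lt_of_le (abs_pos.mpr h) (le_max_left _ _)
    · exact lt_of_lt_of_le (abs_pos.mpr h) (le_max_right _ _)
  -- divisibility
  have hgcd : D ∣ (Int.gcd r.re r.im : ℤ) := by
    have h1 : (2:ℕ)^(v2 r) ∣ Int.gcd r.re r.im := pow_padicValNat_dvd
    rw [hDdef]
    exact_mod_cast Int.natCast_dvd_natCast.mpr h1
  have hdre : D ∣ r.re := dvd_trans hgcd (Int.gcd_dvd_left _ _)
  have hdim : D ∣ r.im := dvd_trans hgcd (Int.gcd_dvd_right _ _)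
  have hdinf : D ∣ linf r := by
    simp only [linf]
    rcases le_total |r.re| |r.im| with h | h
    · rw [max_eq_right h]; exact (dvd_abs _ _).mpr hdim
    · rw [max_eq_left h]; exact (dvd_abs _ _).mpr hdre
  have hdl1 : D ∣ l1 r :=
    dvd_add ((dvd_abs _ _).mpr hdre) ((dvd_abs _ _).mpr hdim)
  have hDle : D ≤ linf r := Int.le_of_dvd hpos hdinf
  -- bound from b
  have h2inf : 2 * linf r ≤ l1 b := by
    obtain ⟨g1, g2⟩ := gr_bound a b hb
    rw [← hr] at g1 g2
    simp only [linf]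
    rcases le_total |r.re| |r.im| with h | h
    · rw [max_eq_right h]; exact g2
    · rw [max_eq_left h]; exact g1
  have hl1b : l1 b ≤ 2 * w p - 3 := by
    obtain ⟨mb, hbmem, -, hbcase⟩ := phi_spec b
    have hw2 : w (p+2) = 2 * w p := by
      have h := w_shift p 1
      rw [show p + 2*1 = p+2 from by omega] at h
      rw [h]; ring
    have honb : (1:ℤ) ≤ 2^(v2 b) := one_le_pow₀ (by norm_num)
    rcases hbcase with ⟨hle, hphib⟩ | ⟨hgt, hphib⟩
    · have hmb : (mb+1) + 2*(v2 b) = p + 2 := by omega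
      have e : 2^(v2 b) * w (mb+1) = w (p+2) := by rw [← hmb, w_shift]
      calc l1 b ≤ 2^(v2 b) * (w (mb+1) - 3) := hle
        _ = 2^(v2 b) * w (mb+1) - 3 * 2^(v2 b) := by ring
        _ = w (p+2) - 3 * 2^(v2 b) := by rw [e]
        _ ≤ 2 * w p - 3 := by rw [hw2]; linarith
    · have hmb : mb + 2*(v2 b) = p := by omega
      have e : 2^(v2 b) * w mb = w p := by rw [← hmb, w_shift]
      have hlb2 : l1 b ≤ 2 * linf b := by
        simp only [linf, l1]
        have := abs_nonneg b.re
        have := abs_nonneg b.im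
        rcases max_cases |b.re| |b.im| with ⟨h1, h2⟩ | ⟨h1, h2⟩ <;> rw [h1] <;> linarith
      have hbm : linf b ≤ 2^(v2 b) * (w mb - 2) := hbmem
      calc l1 b ≤ 2 * linf b := hlb2
        _ ≤ 2 * (2^(v2 b) * (w mb - 2)) := by linarith
        _ = 2 * (2^(v2 b) * w mb) - 4 * 2^(v2 b) := by ring
        _ = 2 * w p - 4 * 2^(v2 b) := by rw [e]
        _ ≤ 2 * w p - 3 := by linarith
  have hup : linf r ≤ w p - 2 := by omega
  -- the main dichotomy
  obtain ⟨m, hmem, hmin, hcase⟩ := phi_spec r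
  have honer : (1:ℤ) ≤ 2^(v2 r) := one_le_pow₀ (by norm_num)
  have hmem' : linf r ≤ D * (w m - 2) := hmem
  have hbig : ∀ (hc : p + 1 ≤ 2 * (v2 r)), w (p+1) - D * 2 ≤ l1 r := by
    intro hc
    have h1 : w (p+1) ≤ w (2*(v2 r)) := w_mono hc
    have h2 : w (0 + 2*(v2 r)) = 2^(v2 r) * w 0 := w_shift 0 (v2 r)
    rw [zero_add, w0] at h2
    rw [← hDdef] at h2
    linarith
  have main : linf r = w p - D ∨ w (p+1) - D * 2 ≤ l1 r := by
    rcases hcase with ⟨hle1, hphir⟩ | ⟨hgt1, hphir⟩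
    · by_cases hc : p + 1 ≤ 2 * (v2 r)
      · exact Or.inr (hbig hc)
      · left
        have hm1 : p + 1 - 2*(v2 r) ≤ m := by omega
        have hm2 : 1 ≤ m := by omega
        have hlow : 2^(v2 r) * (w (m-1) - 2) < linf r := hmin (m-1) (by omega)
        have hmono : w (p - 2*(v2 r)) ≤ w (m-1) := w_mono (by omega)
        have hsh : 2^(v2 r) * w (p - 2*(v2 r)) = w p := by
          have h := w_shift (p - 2*(v2 r)) (v2 r)
          rw [show p - 2*(v2 r) + 2*(v2 r) = p from by omega] at h
          exact h.symm
        have hx : (2:ℤ)^(v2 r) * w (p - 2*(v2 r)) ≤ 2^(v2 r) * w (m-1) :=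
          mul_le_mul_of_nonneg_left hmono (by positivity)
        have hWlow : w p - 2 * D < linf r := by
          rw [hDdef]; nlinarith [hlow, hx, hsh]
        obtain ⟨u, hu⟩ := hdinf
        obtain ⟨v, hv⟩ := hdvd
        have h1 : v - 2 < u := by
          have hh : D * (v - 2) < D * u := by
            calc D * (v - 2) = w p - 2 * D := by rw [hv]; ring
              _ < linf r := hWlow
              _ = D * u := hu
          exact lt_of_mul_lt_mul_left hh (le_of_lt hDpos)
        have h2 : u < v := by
          have hh : D * u < D * v := by
            calc D * u = linf r := hu.symm
              _ ≤ w p - 2 := hup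
              _ < w p := by linarith
              _ = D * v := hv
          exact lt_of_mul_lt_mul_left hh (le_of_lt hDpos)
        have huv : u = v - 1 := by omega
        rw [hu, hv, huv]; ring
    · by_cases hc : p + 1 ≤ 2 * (v2 r)
      · exact Or.inr (hbig hc)
      · right
        have hm1 : p + 1 - 2*(v2 r) ≤ m + 1 := by omega
        have hmono : w (p + 1 - 2*(v2 r)) ≤ w (m+1) := w_mono hm1
        have hsh : 2^(v2 r) * w (p + 1 - 2*(v2 r)) = w (p+1) := by
          have h := w_shift (p + 1 - 2*(v2 r)) (v2 r)
          rw [show p + 1 - 2*(v2 r) + 2*(v2 r) = p + 1 from by omega] at h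
          exact h.symm
        have hx : (2:ℤ)^(v2 r) * w (p + 1 - 2*(v2 r)) ≤ 2^(v2 r) * w (m+1) :=
          mul_le_mul_of_nonneg_left hmono (by positivity)
        have hlow : w (p+1) - 3 * D < l1 r := by
          rw [hDdef]; nlinarith [hgt1, hx, hsh]
        obtain ⟨y, hy⟩ := hdl1
        have h1 : w (p + 1 - 2*(v2 r)) - 3 < y := by
          have hh : D * (w (p + 1 - 2*(v2 r)) - 3) < D * y := by
            calc D * (w (p + 1 - 2*(v2 r)) - 3) = w (p+1) - 3 * D := by
                  rw [hDdef, mul_sub, hsh]; all_goals ring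
              _ < l1 r := hlow
              _ = D * y := hy
          exact lt_of_mul_lt_mul_left hh (le_of_lt hDpos)
        have h2 : w (p + 1 - 2*(v2 r)) - 2 ≤ y := by omega
        calc w (p+1) - D * 2 = D * (w (p + 1 - 2*(v2 r)) - 2) := by
              rw [hDdef, mul_sub, hsh]; all_goals ring
          _ ≤ D * y := mul_le_mul_of_nonneg_left h2 (le_of_lt hDpos)
          _ = l1 r := hy.symm
  refine ⟨main, ?_, ?_, ?_⟩
  · -- linf r ≥ w (p+1) - w p : parity analysis
    rcases Nat.even_or_odd p with ⟨k, hk⟩ | ⟨k, hk⟩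
    · set E : ℤ := 2^k with hE
      have hWp : w p = 3 * E := by rw [show p = 2*k from by omega, w_even]
      have hWp1 : w (p+1) = 4 * E := by rw [show p+1 = 2*k+1 from by omega, w_odd]
      have hDE : D ∣ E := by
        have hco : IsCoprime D (3:ℤ) := IsCoprime.pow_left coprime23
        exact hco.dvd_of_dvd_mul_left (by
          have hh := hdvd
          rwa [hWp] at hh)
      have hDEle : D ≤ E := Int.le_of_dvd (by positivity) hDE
      rcases main with h | h
      · rw [hWp, hWp1]; linarith
      · rw [hWp, hWp1]; linarith
    · set E : ℤ := 2^k with hE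
      have hWp : w p = 4 * E := by rw [show p = 2*k+1 from by omega, w_odd]
      have hWp1 : w (p+1) = 6 * E := by
        rw [show p+1 = 2*(k+1) from by omega, w_even, pow_succ, hE]; ring
      by_cases hjk : v2 r ≤ k
      · have hDEle : D ≤ E := by
          rw [hDdef, hE]
          exact pow_le_pow_right₀ (by norm_num) hjk
        rcases main with h | h
        · rw [hWp, hWp1]; linarith
        · rw [hWp, hWp1]; linarith
      · have h2E : 2 * E ≤ D := by
          have h1 : (2:ℤ)^(k+1) ≤ 2^(v2 r) := pow_le_pow_right₀ (by norm_num) (by omega)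
          rw [hDdef, hE]
          calc 2 * (2:ℤ)^k = 2^(k+1) := by rw [pow_succ]; ring
            _ ≤ 2^(v2 r) := h1
        rw [hWp, hWp1]; linarith
  · -- l1 r ≥ w p - D
    rcases Nat.even_or_odd p with ⟨k, hk⟩ | ⟨k, hk⟩
    · set E : ℤ := 2^k with hE
      have hWp : w p = 3 * E := by rw [show p = 2*k from by omega, w_even]
      have hWp1 : w (p+1) = 4 * E := by rw [show p+1 = 2*k+1 from by omega, w_odd]
      have hDE : D ∣ E := by
        have hco : IsCoprime D (3:ℤ) := IsCoprime.pow_left coprime23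
        exact hco.dvd_of_dvd_mul_left (by
          have hh := hdvd
          rwa [hWp] at hh)
      have hDEle : D ≤ E := Int.le_of_dvd (by positivity) hDE
      rcases main with h | h
      · rw [hWp]; linarith
      · rw [hWp]; rw [hWp1] at h; linarith
    · set E : ℤ := 2^k with hE
      have hWp : w p = 4 * E := by rw [show p = 2*k+1 from by omega, w_odd]
      have hWp1 : w (p+1) = 6 * E := by
        rw [show p+1 = 2*(k+1) from by omega, w_even, pow_succ, hE]; ring
      by_cases hjk : v2 r ≤ k
      · have hDEle : D ≤ E := by
          rw [hDdef, hE]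
          exact pow_le_pow_right₀ (by norm_num) hjk
        rcases main with h | h
        · rw [hWp]; linarith
        · rw [hWp]; rw [hWp1] at h; linarith
      · have h2E : 2 * E ≤ D := by
          have h1 : (2:ℤ)^(k+1) ≤ 2^(v2 r) := pow_le_pow_right₀ (by norm_num) (by omega)
          rw [hDdef, hE]
          calc 2 * (2:ℤ)^k = 2^(k+1) := by rw [pow_succ]; ring
            _ ≤ 2^(v2 r) := h1
        rw [hWp]; linarith
  · -- last part
    intro hne
    rcases main with h | h
    · exact absurd h hne
    have hle' : linf r ≤ w p - 2 * D := by
      obtain ⟨u, hu⟩ := hdinf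
      obtain ⟨v, hv⟩ := hdvd
      have h2 : u < v := by
        have hh : D * u < D * v := by
          calc D * u = linf r := hu.symm
            _ ≤ w p - 2 := hup
            _ < w p := by linarith
            _ = D * v := hv
        exact lt_of_mul_lt_mul_left hh (le_of_lt hDpos)
      have h3 : u ≠ v - 1 := by
        intro he
        apply hne
        rw [hu, hv, he]; ring
      have h4 : u ≤ v - 2 := by omega
      calc linf r = D * u := hu
        _ ≤ D * (v - 2) := mul_le_mul_of_nonneg_left h4 (le_of_lt hDpos)
        _ = w p - 2 * D := by rw [hv]; ring
    rw [ge_iff_le, hmm]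
    linarith
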